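/- Let ℵ be an infinite cardinal, X = ∏_{s∈S} X_s a topological product with property (I_ℵ), and let Y₁, …, Yₙ be topological spaces each having property (III_ℵ). Then every separately continuous function f : X × Y₁ × ⋯ × Yₙ → ℝ depends on at most ℵ coordinates with respect to the first variable; that is, there exists T ⊆ S with |T| ≤ ℵ such that f(u, y₁,…,yₙ) = f(v, y₁,…,yₙ) whenever u|_T = v|_T. -/

import Mathlib

universe u

open Cardinal

/-- Property (I_ℵ): every locally finite family of nonempty open sets has cardinality ≤ ℵ. -/
def PropI (c : Cardinal.{u}) (X : Type u) [TopologicalSpace X] : Prop :=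
  ∀ (I : Type u) (U : I → Set X), (∀ i, IsOpen (U i)) → (∀ i, (U i).Nonempty) →
    LocallyFinite U → #I ≤ c

/-- Property (II_ℵ): every pointwise finite family of nonempty open sets has cardinality ≤ ℵ. -/
def PropII (c : Cardinal.{u}) (X : Type u) [TopologicalSpace X] : Prop :=
  ∀ (I : Type u) (U : I → Set X), (∀ i, IsOpen (U i)) → (∀ i, (U i).Nonempty) →
    (∀ x : X, {i | x ∈ U i}.Finite) → #I ≤ c

/-- Property (III_ℵ): every ℵ-pointwise family of nonempty open sets has cardinality ≤ ℵ. -/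
def PropIII (c : Cardinal.{u}) (X : Type u) [TopologicalSpace X] : Prop :=
  ∀ (I : Type u) (U : I → Set X), (∀ i, IsOpen (U i)) → (∀ i, (U i).Nonempty) →
    (∀ x : X, #{i | x ∈ U i} ≤ c) → #I ≤ c

section Stmt7Aux
open Set

lemma mulHelper {a b c : Cardinal.{u}} (hc : aleph0 ≤ c) (ha : a ≤ c) (hb : b ≤ c) :
    a * b ≤ c :=
  (Cardinal.mul_le_max a b).trans (max_le (max_le ha hb) hc)

lemma iUnionHelper {α : Type u} {ι : Type u} {c : Cardinal.{u}} (hc : aleph0 ≤ c)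
    (g : ι → Set α) (hι : #ι ≤ c) (hg : ∀ i, #(g i) ≤ c) :
    #(⋃ i, g i) ≤ c := by
  refine (mk_iUnion_le g).trans (mulHelper hc hι ?_)
  rcases isEmpty_or_nonempty ι with h | h
  · simp [ciSup_of_empty]
  · exact ciSup_le' hg

lemma succCardType {c : Cardinal.{u}} {α : (Order.succ c).ord.ToType} :
    #(Iio α) ≤ c :=
  Order.lt_succ_iff.mp (Cardinal.mk_Iio_toType_ord_lt α)

lemma notSuccLe {c : Cardinal.{u}} : ¬ #(Order.succ c).ord.ToType ≤ c := by
  rw [mk_ord_toType]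
  exact fun h => (Order.lt_succ c).not_ge h

lemma nu_eps {c : Cardinal.{u}} (hc : aleph0 ≤ c) {S : Type u} {X : S → Type u}
    [∀ s, TopologicalSpace (X s)] (hX : PropI c (∀ s, X s))
    (f : (∀ s, X s) → ℝ) (hf : Continuous f) (ε : ℝ) (hε : 0 < ε) :
    ∃ T : Set S, #T ≤ c ∧ ∀ u v : ∀ s, X s, (∀ s ∈ T, u s = v s) → |f u - f v| ≤ ε := by
  classical
  by_contra hfail
  push_neg at hfail
  rcases isEmpty_or_nonempty (∀ s, X s) with he | hne
  · obtain ⟨u, -⟩ := hfail ∅ (by simp)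
    exact he.false u
  obtain ⟨x₀⟩ := hne
  -- Key step: from failure at T, extract a pair differing only on a finite set
  have key : ∀ T : Set S, #T ≤ c →
      ∃ p : (∀ s, X s) × (∀ s, X s) × Finset S,
        (∀ s ∈ T, p.1 s = p.2.1 s) ∧ (∀ s ∉ p.2.2, p.1 s = p.2.1 s) ∧
          ε < |f p.1 - f p.2.1| := by
    intro T hT
    obtain ⟨u, v, huv, hgap⟩ := hfail T hT
    have hopen : IsOpen (f ⁻¹' Metric.ball (f v) (|f u - f v| - ε)) :=
      hf.isOpen_preimage _ Metric.isOpen_ball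
    have hv : v ∈ f ⁻¹' Metric.ball (f v) (|f u - f v| - ε) := by
      simp only [mem_preimage, Metric.mem_ball, dist_self]
      linarith
    obtain ⟨G, O, hO, hsub⟩ := isOpen_pi_iff.mp hopen v hv
    refine ⟨⟨u, fun s => if s ∈ G then v s else u s, G⟩, ?_, ?_, ?_⟩
    · intro s hs
      by_cases h : s ∈ G
      · simp only [if_pos h]; exact huv s hs
      · simp only [if_neg h]
    · intro s hs
      simp only [if_neg hs]
    · have hv' : (fun s => if s ∈ G then v s else u s) ∈ (G : Set S).pi O := by
        intro s hs
        simp only [Finset.mem_coe] at hs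
        simp only [if_pos hs]
        exact (hO s hs).2
      have h2 := hsub hv'
      simp only [mem_preimage, Metric.mem_ball, Real.dist_eq] at h2
      set v' : ∀ s, X s := fun s => if s ∈ G then v s else u s
      have h3 : |f u - f v| ≤ |f u - f v'| + |f v' - f v| := abs_sub_le _ _ _
      simp only
      linarith
  -- transfinite construction
  set o := (Order.succ c).ord.ToType with ho
  have wf : WellFounded ((· < ·) : o → o → Prop) := IsWellFounded.wf
  set pick : Set S → (∀ s, X s) × (∀ s, X s) × Finset S := fun T =>
    if h : ∃ p : (∀ s, X s) × (∀ s, X s) × Finset S,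
        (∀ s ∈ T, p.1 s = p.2.1 s) ∧ (∀ s ∉ p.2.2, p.1 s = p.2.1 s) ∧
          ε < |f p.1 - f p.2.1|
    then h.choose else ⟨x₀, x₀, ∅⟩ with hpick
  set F : o → (∀ s, X s) × (∀ s, X s) × Finset S :=
    wf.fix (fun α rec => pick {s | ∃ β, ∃ h : β < α, s ∈ (rec β h).2.2}) with hF
  set Tset : o → Set S := fun α => {s | ∃ β, ∃ _h : β < α, s ∈ (F β).2.2} with hTset
  have hFeq : ∀ α, F α = pick (Tset α) := by
    intro α
    rw [hF]
    rw [WellFounded.fix_eq]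
  have hTcard : ∀ α, #(Tset α) ≤ c := by
    intro α
    have heq : Tset α = ⋃ β : Iio α, ((F β.1).2.2 : Set S) := by
      ext s
      simp only [hTset, mem_setOf_eq, iUnion_coe_set, mem_Iio, mem_iUnion, Finset.mem_coe]
    rw [heq]
    refine iUnionHelper hc _ succCardType fun β => ?_
    exact le_trans (le_of_lt (lt_aleph0_of_finite _)) hc
  have hP : ∀ α, (∀ s ∈ Tset α, (F α).1 s = (F α).2.1 s) ∧
      (∀ s ∉ (F α).2.2, (F α).1 s = (F α).2.1 s) ∧ ε < |f (F α).1 - f (F α).2.1| := by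
    intro α
    have hex := key (Tset α) (hTcard α)
    rw [hFeq α, hpick]
    simp only [dif_pos hex]
    exact hex.choose_spec
  classical
  set D : o → Set S := fun α => ((F α).2.2 : Set S) \ Tset α with hDdef
  set patch : o → (∀ s, X s) → (∀ s, X s) := fun α x s => if s ∈ D α then (F α).2.1 s else x s with hpatch
  have hpatchc : ∀ α, Continuous (patch α) := by
    intro α
    refine continuous_pi fun s => ?_
    by_cases h : s ∈ D α
    · simp only [hpatch, if_pos h]; exact continuous_const
    · simp only [hpatch, if_neg h]; exact continuous_apply s
  set W : o → Set (∀ s, X s) := fun α => {x | ε/2 < |f x - f (patch α x)|} with hW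
  have hWopen : ∀ α, IsOpen (W α) := fun α =>
    isOpen_lt continuous_const ((hf.sub (hf.comp (hpatchc α))).abs)
  have hpu : ∀ α, patch α (F α).1 = (F α).2.1 := by
    intro α
    funext s
    by_cases h : s ∈ D α
    · simp only [hpatch, if_pos h]
    · simp only [hpatch, if_neg h]
      by_cases hG : s ∈ (F α).2.2
      · have hsT : s ∈ Tset α := by
          by_contra hsT
          exact h ⟨hG, hsT⟩
        exact (hP α).1 s hsT
      · exact (hP α).2.1 s hG
  have hWne : ∀ α, (W α).Nonempty := by
    intro α
    refine ⟨(F α).1, ?_⟩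
    simp only [hW, mem_setOf_eq, hpu α]
    have := (hP α).2.2
    linarith
  have hDdisj : ∀ {β α : o}, β < α → ∀ s, s ∈ D α → s ∉ D β := by
    intro β α hβα s hsα hsβ
    exact hsα.2 ⟨β, hβα, hsβ.1⟩
  have hWlf : LocallyFinite W := by
    intro x
    have hx : x ∈ f ⁻¹' Metric.ball (f x) (ε/4) := by
      simp only [mem_preimage, Metric.mem_ball, dist_self]; linarith
    obtain ⟨K, O, hO, hsub⟩ := isOpen_pi_iff.mp (hf.isOpen_preimage _ Metric.isOpen_ball) x hx
    refine ⟨(K : Set S).pi O, ?_, ?_⟩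
    · exact (isOpen_set_pi K.finite_toSet fun a ha => (hO a ha).1).mem_nhds
        (fun a ha => (hO a ha).2)
    · have hssub : {α | (W α ∩ (K : Set S).pi O).Nonempty} ⊆ {α | (D α ∩ (K : Set S)).Nonempty} := by
        intro α hα
        obtain ⟨z, hzW, hzN⟩ := hα
        by_contra hemp
        simp only [mem_setOf_eq, not_nonempty_iff_eq_empty, eq_empty_iff_forall_notMem] at hemp
        have hz2 : patch α z ∈ (K : Set S).pi O := by
          intro a ha
          have haD : a ∉ D α := fun h => hemp a ⟨h, ha⟩
          simp only [hpatch, if_neg haD]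
          exact hzN a ha
        have h1 := hsub hzN
        have h2 := hsub hz2
        simp only [mem_preimage, Metric.mem_ball, Real.dist_eq] at h1 h2
        simp only [hW, mem_setOf_eq] at hzW
        have h3 : |f z - f (patch α z)| ≤ |f z - f x| + |f x - f (patch α z)| :=
          abs_sub_le _ _ _
        rw [abs_sub_comm (f x)] at h3
        linarith
      refine Set.Finite.subset ?_ hssub
      set A := {α | (D α ∩ (K : Set S)).Nonempty} with hA
      have hchoice : ∀ α : A, ∃ s, s ∈ D α.1 ∩ (K : Set S) := fun α => α.2
      choose g hg using hchoice
      have hginj : Function.Injective (fun α : A => (⟨g α, (hg α).2⟩ : ↥(K : Set S))) := by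
        intro α β hEq
        simp only [Subtype.mk.injEq] at hEq
        by_contra hne
        have hne' : α.1 ≠ β.1 := fun h => hne (Subtype.ext h)
        rcases lt_or_gt_of_ne hne' with h | h
        · refine hDdisj h (g β) (hg β).1 ?_
          rw [← hEq]; exact (hg α).1
        · refine hDdisj h (g α) (hg α).1 ?_
          rw [hEq]; exact (hg β).1
      have hKfin : Finite ↥(K : Set S) := K.finite_toSet.to_subtype
      have : Finite ↥A := Finite.of_injective _ hginj
      exact Set.finite_coe_iff.mp this
  exact notSuccLe (hX o W hWopen hWne hWlf)

lemma noble_ulmer {c : Cardinal.{u}} (hc : aleph0 ≤ c) {S : Type u} {X : S → Type u}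
    [∀ s, TopologicalSpace (X s)] (hX : PropI c (∀ s, X s))
    (f : (∀ s, X s) → ℝ) (hf : Continuous f) :
    ∃ T : Set S, #T ≤ c ∧ ∀ u v : ∀ s, X s, (∀ s ∈ T, u s = v s) → f u = f v := by
  have h : ∀ m : ℕ, ∃ T : Set S, #T ≤ c ∧
      ∀ u v, (∀ s ∈ T, u s = v s) → |f u - f v| ≤ 1/(m+1) :=
    fun m => nu_eps hc hX f hf _ (by positivity)
  choose T hTc hT using h
  have hUnion : (⋃ m, T m) = ⋃ m : ULift.{u} ℕ, T m.down := by
    ext s; simp only [mem_iUnion]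
    exact ⟨fun ⟨m, hm⟩ => ⟨⟨m⟩, hm⟩, fun ⟨m, hm⟩ => ⟨m.down, hm⟩⟩
  refine ⟨⋃ m, T m, ?_, ?_⟩
  · rw [hUnion]
    exact iUnionHelper hc _ (le_trans Cardinal.mk_le_aleph0 hc) fun m => hTc m.down
  · intro u v hagree
    by_contra hne
    have hd : 0 < |f u - f v| := abs_pos.mpr (sub_ne_zero.mpr hne)
    obtain ⟨m, hm⟩ := exists_nat_one_div_lt hd
    have := hT m u v fun s hs => hagree s (mem_iUnion.mpr ⟨m, hs⟩)
    linarith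

def GoodDim (c : Cardinal.{u}) (S : Type u) (X : S → Type u)
    [∀ s, TopologicalSpace (X s)] (n : ℕ) : Prop :=
  ∀ (Y : Fin n → Type u) [∀ i, TopologicalSpace (Y i)],
    (∀ i, PropIII c (Y i)) →
    ∀ f : (∀ s, X s) × (∀ i, Y i) → ℝ,
      (∀ y, Continuous fun x : ∀ s, X s => f (x, y)) →
      (∀ (x : ∀ s, X s) (i : Fin n) (y : ∀ j, Y j),
        Continuous fun yi : Y i => f (x, Function.update y i yi)) →
      ∃ T : Set S, #T ≤ c ∧
        ∀ (u v : ∀ s, X s) (y : ∀ i, Y i),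
          (∀ s ∈ T, u s = v s) → f (u, y) = f (v, y)

lemma goodDim_zero {c : Cardinal.{u}} (hc : aleph0 ≤ c) {S : Type u} {X : S → Type u}
    [∀ s, TopologicalSpace (X s)] (hX : PropI c (∀ s, X s)) : GoodDim c S X 0 := by
  intro Y tY hY f hf1 hf2
  obtain ⟨T, hTc, hT⟩ := noble_ulmer hc hX (fun x => f (x, finZeroElim)) (hf1 _)
  refine ⟨T, hTc, fun u v y h => ?_⟩
  have hy : y = finZeroElim := funext fun i => i.elim0
  rw [hy]
  exact hT u v h

lemma goodDim_step {c : Cardinal.{u}} (hc : aleph0 ≤ c) {S : Type u} {X : S → Type u}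
    [∀ s, TopologicalSpace (X s)] (hX : PropI c (∀ s, X s)) {n : ℕ}
    (IH : GoodDim c S X n) : GoodDim c S X (n+1) := by
  classical
  intro Y tY hY f hf1 hf2
  rcases isEmpty_or_nonempty ((∀ s, X s) × (∀ i, Y i)) with he | hne
  · exact ⟨∅, by simp, fun u v y _ => (he.false (u, y)).elim⟩
  obtain ⟨⟨x₀, y₀⟩⟩ := hne
  have hIH : ∀ z : Y (Fin.last n), ∃ T : Set S, #T ≤ c ∧
      ∀ (u v : ∀ s, X s) (y' : ∀ i : Fin n, Y (Fin.castSucc i)),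
        (∀ s ∈ T, u s = v s) → f (u, Fin.snoc y' z) = f (v, Fin.snoc y' z) := by
    intro z
    have := IH (fun i => Y (Fin.castSucc i)) (fun i => hY _)
      (fun p => f (p.1, Fin.snoc p.2 z))
      (fun y' => hf1 (Fin.snoc y' z))
      (fun x i y' => by
        have h2 := hf2 x (Fin.castSucc i) (Fin.snoc y' z)
        simp only [← Fin.snoc_update] at h2
        exact h2)
    obtain ⟨T, hT1, hT2⟩ := this
    exact ⟨T, hT1, fun u v y' h => hT2 u v y' h⟩
  choose Tz hTzc hTz using hIH
  by_contra hfail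
  push_neg at hfail
  have key : ∀ T : Set S, #T ≤ c →
      ∃ p : (∀ s, X s) × (∀ s, X s) × (∀ i, Y i),
        (∀ s ∈ T, p.1 s = p.2.1 s) ∧ (∀ s ∉ Tz (p.2.2 (Fin.last n)), p.1 s = p.2.1 s) ∧
          f (p.1, p.2.2) ≠ f (p.2.1, p.2.2) := by
    intro T hT
    obtain ⟨u, v, y, hagree, hne2⟩ := hfail T hT
    set z := y (Fin.last n) with hz
    set w : ∀ s, X s := fun s => if s ∈ Tz z then v s else u s with hw
    have hwv : f (w, y) = f (v, y) := by
      have h1 := hTz (y (Fin.last n)) w v (Fin.init y) fun s hs => by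
        simp only [hw, hz, if_pos hs]
      rwa [Fin.snoc_init_self] at h1
    refine ⟨⟨u, w, y⟩, ?_, ?_, ?_⟩
    · intro s hs
      by_cases h : s ∈ Tz z
      · simp only [hw, if_pos h]; exact hagree s hs
      · simp only [hw, if_neg h]
    · intro s hs; simp only [hw, if_neg (show s ∉ Tz z from hs)]
    · exact fun h => hne2 (h.trans hwv)
  set o := (Order.succ c).ord.ToType with ho
  have wf : WellFounded ((· < ·) : o → o → Prop) := IsWellFounded.wf
  set pick : Set S → (∀ s, X s) × (∀ s, X s) × (∀ i, Y i) := fun T =>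
    if h : ∃ p : (∀ s, X s) × (∀ s, X s) × (∀ i, Y i),
        (∀ s ∈ T, p.1 s = p.2.1 s) ∧ (∀ s ∉ Tz (p.2.2 (Fin.last n)), p.1 s = p.2.1 s) ∧
          f (p.1, p.2.2) ≠ f (p.2.1, p.2.2)
    then h.choose else ⟨x₀, x₀, y₀⟩ with hpick
  set F : o → (∀ s, X s) × (∀ s, X s) × (∀ i, Y i) :=
    wf.fix (fun α rec => pick {s | ∃ β, ∃ h : β < α, s ∈ Tz ((rec β h).2.2 (Fin.last n))}) with hF
  set Tset : o → Set S := fun α => {s | ∃ β, ∃ _h : β < α, s ∈ Tz ((F β).2.2 (Fin.last n))} with hTset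
  have hFeq : ∀ α, F α = pick (Tset α) := by
    intro α; rw [hF]; rw [WellFounded.fix_eq]
  have hTcard : ∀ α, #(Tset α) ≤ c := by
    intro α
    have heq : Tset α = ⋃ β : Iio α, Tz ((F β.1).2.2 (Fin.last n)) := by
      ext s
      simp only [hTset, mem_setOf_eq, iUnion_coe_set, mem_Iio, mem_iUnion]
    rw [heq]
    exact iUnionHelper hc _ succCardType fun β => hTzc _
  have hP : ∀ α, (∀ s ∈ Tset α, (F α).1 s = (F α).2.1 s) ∧
      (∀ s ∉ Tz ((F α).2.2 (Fin.last n)), (F α).1 s = (F α).2.1 s) ∧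
      f ((F α).1, (F α).2.2) ≠ f ((F α).2.1, (F α).2.2) := by
    intro α
    have hex := key (Tset α) (hTcard α)
    rw [hFeq α, hpick]
    simp only [dif_pos hex]
    exact hex.choose_spec
  set V : o → Set (Y (Fin.last n)) := fun α =>
    {z | f ((F α).1, Function.update (F α).2.2 (Fin.last n) z) ≠
      f ((F α).2.1, Function.update (F α).2.2 (Fin.last n) z)} with hV
  have hVopen : ∀ α, IsOpen (V α) := by
    intro α
    have h1 := hf2 (F α).1 (Fin.last n) (F α).2.2
    have h2 := hf2 (F α).2.1 (Fin.last n) (F α).2.2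
    have heq : V α = {z | f ((F α).1, Function.update (F α).2.2 (Fin.last n) z) =
        f ((F α).2.1, Function.update (F α).2.2 (Fin.last n) z)}ᶜ := rfl
    rw [heq]
    exact (isClosed_eq h1 h2).isOpen_compl
  have hVne : ∀ α, (V α).Nonempty := by
    intro α
    refine ⟨(F α).2.2 (Fin.last n), ?_⟩
    simp only [hV, mem_setOf_eq, Function.update_eq_self]
    exact (hP α).2.2
  have hVpt : ∀ z : Y (Fin.last n), #{α | z ∈ V α} ≤ c := by
    intro z
    set A := {α | z ∈ V α} with hA
    have hsel : ∀ α : A, ∃ s, s ∈ Tz z ∧ (F α.1).1 s ≠ (F α.1).2.1 s := by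
      rintro ⟨α, hα⟩
      by_contra hcon
      push_neg at hcon
      set yz := Function.update (F α).2.2 (Fin.last n) z with hyz
      have hsnoc : Fin.snoc (Fin.init yz) z = yz := by
        have h3 := Fin.snoc_init_self yz
        rwa [show yz (Fin.last n) = z from Function.update_self _ _ _] at h3
      have heq := hTz z (F α).1 (F α).2.1 (Fin.init yz) hcon
      rw [hsnoc] at heq
      exact hα heq
    choose g hg using hsel
    have hginj : Function.Injective (fun α : A => (⟨g α, (hg α).1⟩ : ↥(Tz z))) := by
      have main : ∀ (α β : A), α.1 < β.1 → g α = g β → False := by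
        intro α β hlt hEq2
        have h1 : g α ∈ Tz ((F α.1).2.2 (Fin.last n)) := by
          by_contra hnot
          exact (hg α).2 ((hP α.1).2.1 _ hnot)
        have h2 : g β ∈ Tset β.1 := ⟨α.1, hlt, hEq2 ▸ h1⟩
        exact (hg β).2 ((hP β.1).1 _ h2)
      intro α β hEq
      simp only [Subtype.mk.injEq] at hEq
      by_contra hne2
      have hne' : α.1 ≠ β.1 := fun h => hne2 (Subtype.ext h)
      rcases lt_or_gt_of_ne hne' with h | h
      · exact main α β h hEq
      · exact main β α h hEq.symm
    exact le_trans (Cardinal.mk_le_of_injective hginj) (hTzc z)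
  exact notSuccLe (hY (Fin.last n) o V hVopen hVne hVpt)


end Stmt7Aux

theorem stmt7 (c : Cardinal.{u}) (hc : Cardinal.aleph0 ≤ c)
    (S : Type u) (X : S → Type u) [∀ s, TopologicalSpace (X s)]
    (n : ℕ) (Y : Fin n → Type u) [∀ i, TopologicalSpace (Y i)]
    (hX : PropI c (∀ s, X s)) (hY : ∀ i, PropIII c (Y i))
    (f : (∀ s, X s) × (∀ i, Y i) → ℝ)
    (hf1 : ∀ y, Continuous fun x : ∀ s, X s => f (x, y))
    (hf2 : ∀ (x : ∀ s, X s) (i : Fin n) (y : ∀ j, Y j),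
      Continuous fun yi : Y i => f (x, Function.update y i yi)) :
    ∃ T : Set S, #T ≤ c ∧
      ∀ (u v : ∀ s, X s) (y : ∀ i, Y i),
        (∀ s ∈ T, u s = v s) → f (u, y) = f (v, y) := by
  have hall : ∀ m : ℕ, GoodDim c S X m := by
    intro m
    induction m with
    | zero => exact goodDim_zero hc hX
    | succ m IH => exact goodDim_step hc hX IH
  exact hall n Y hY f hf1 hf2
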